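/- Positivity of the quantity P: let γ>1, let U_b=(u_b,v_b,p_b,ρ_b) and U₁=(u₁,0,p₁,ρ₁) be states with ρ_b,ρ₁>0, u_b,u₁>0, p₁>p_b>0, and u₁>c₁ where c₁=√(γp₁/ρ₁), and suppose the full Rankine–Hugoniot conditions σ·(W(U₁)−W(U_b)) = H(U₁)−H(U_b) hold for some σ≠0. Then P := u₁·( h_b + (u_b²+v_b²)/2 − u₁²/2 ) + ( c₁²/(γ−1) + u₁² )·(u₁ − u_b) > 0, where h_b = γp_b/((γ−1)ρ_b). -/
import Mathlib


noncomputable section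

/-- The flux map `W` of the 2-D steady full Euler system,
with state `U = (u, v, p, ρ)`. -/
def Wf (γ : ℝ) (U : Fin 4 → ℝ) : Fin 4 → ℝ :=
  ![U 3 * U 0,
    U 3 * U 0 ^ 2 + U 2,
    U 3 * U 0 * U 1,
    U 3 * U 0 * (γ * U 2 / ((γ - 1) * U 3) + (U 0 ^ 2 + U 1 ^ 2) / 2)]

/-- The flux map `H` of the 2-D steady full Euler system. -/
def Hf (γ : ℝ) (U : Fin 4 → ℝ) : Fin 4 → ℝ :=
  ![U 3 * U 1,
    U 3 * U 0 * U 1,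
    U 3 * U 1 ^ 2 + U 2,
    U 3 * U 1 * (γ * U 2 / ((γ - 1) * U 3) + (U 0 ^ 2 + U 1 ^ 2) / 2)]

/-- Positivity of the quantity `P` across a strong 1-shock:
under the full Rankine–Hugoniot conditions between `U_b = (u_b, v_b, p_b, ρ_b)` and
`U₁ = (u₁, 0, p₁, ρ₁)`, with `p₁ > p_b` and `u₁ > c₁`, one has
`P = u₁ (h_b + (u_b² + v_b²)/2 - u₁²/2) + (c₁²/(γ-1) + u₁²)(u₁ - u_b) > 0`. -/
theorem P_positive
    (γ u_b v_b p_b ρ_b u₁ p₁ ρ₁ σ : ℝ) (hγ : 1 < γ)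
    (hρb : 0 < ρ_b) (hρ1 : 0 < ρ₁) (hub : 0 < u_b) (hu1 : 0 < u₁)
    (hpb : 0 < p_b) (hpp : p_b < p₁)
    (c₁ : ℝ) (hc₁ : c₁ = Real.sqrt (γ * p₁ / ρ₁)) (hsup : c₁ < u₁)
    (hσ : σ ≠ 0)
    (hRH : σ • (Wf γ ![u₁, 0, p₁, ρ₁] - Wf γ ![u_b, v_b, p_b, ρ_b]) =
      Hf γ ![u₁, 0, p₁, ρ₁] - Hf γ ![u_b, v_b, p_b, ρ_b]) :
    0 < u₁ * (γ * p_b / ((γ - 1) * ρ_b) + (u_b ^ 2 + v_b ^ 2) / 2 - u₁ ^ 2 / 2) +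
        (c₁ ^ 2 / (γ - 1) + u₁ ^ 2) * (u₁ - u_b) := by
  have e0 := congrFun hRH 0
  have e1 := congrFun hRH 1
  have e3 := congrFun hRH 3
  simp [Wf, Hf] at e0 e1 e3
  have hg : (0:ℝ) < γ - 1 := by linarith
  have hp1 : (0:ℝ) < p₁ := hpb.trans hpp
  have hγ0 : (0:ℝ) < γ := lt_trans one_pos hγ
  have hru : ρ₁ * u₁ ≠ 0 := by positivity
  have hB : γ * p₁ / ((γ - 1) * ρ₁) + u₁ ^ 2 / 2
      = γ * p_b / ((γ - 1) * ρ_b) + (u_b ^ 2 + v_b ^ 2) / 2 := by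
    have h : σ * (ρ₁ * u₁) * ((γ * p₁ / ((γ - 1) * ρ₁) + u₁ ^ 2 / 2)
        - (γ * p_b / ((γ - 1) * ρ_b) + (u_b ^ 2 + v_b ^ 2) / 2)) = 0 := by
      linear_combination e3 - (γ * p_b / ((γ - 1) * ρ_b) + (u_b ^ 2 + v_b ^ 2) / 2) * e0
    rcases mul_eq_zero.1 h with h' | h'
    · exact absurd (mul_eq_zero.1 h') (by push_neg; exact ⟨hσ, hru⟩)
    · linarith [sub_eq_zero.1 h']
  have hmom : ρ₁ * u₁ * (u₁ - u_b) = p_b - p₁ := by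
    have h : σ * (ρ₁ * u₁ * (u₁ - u_b) - (p_b - p₁)) = 0 := by
      linear_combination e1 - u_b * e0
    rcases mul_eq_zero.1 h with h' | h'
    · exact absurd h' hσ
    · linarith [sub_eq_zero.1 h']
  have hc2 : c₁ ^ 2 = γ * p₁ / ρ₁ := by
    rw [hc₁, sq]; exact Real.mul_self_sqrt (by positivity)
  have hc1nn : 0 ≤ c₁ := hc₁ ▸ Real.sqrt_nonneg _
  have hu2 : γ * p₁ / ρ₁ < u₁ ^ 2 := by nlinarith
  have hd : u₁ - u_b = (p_b - p₁) / (ρ₁ * u₁) := by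
    field_simp
    linarith [hmom]
  rw [← hB, hc2, hd]
  have hu2' : γ * p₁ < u₁ ^ 2 * ρ₁ := (div_lt_iff₀ hρ1).1 hu2
  have hEq : u₁ * (γ * p₁ / ((γ - 1) * ρ₁) + u₁ ^ 2 / 2 - u₁ ^ 2 / 2) +
      (γ * p₁ / ρ₁ / (γ - 1) + u₁ ^ 2) * ((p_b - p₁) / (ρ₁ * u₁)) =
      (γ * p₁ * ρ₁ * u₁ ^ 2 + (γ * p₁ + (γ - 1) * ρ₁ * u₁ ^ 2) * (p_b - p₁)) /
        (ρ₁ ^ 2 * u₁ * (γ - 1)) := by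
    field_simp
    ring
  rw [hEq]
  apply div_pos
  · nlinarith [mul_pos (hpb.trans hpp) (sub_pos.2 hu2'), mul_pos (mul_pos (show (0:ℝ) < γ by linarith) hpb) hpb, mul_pos (mul_pos (mul_pos hg hρ1) (pow_pos hu1 2)) hpb]
  · positivity
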